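/- arXiv:1710.07527 — 7 statements merged into one kernel-verified Lean document; each statement's English description precedes it below -/
import Mathlib

section
/- If G is a graph of order n with distinguishing number D(G) = d, then ρ_d(G) ≤ n − Det(G). -/
open SimpleGraph

/-- A labeling `f : V → Fin d` is `d`-distinguishing if the only automorphism
preserving all labels is the identity. -/
def IsDistinguishing {V : Type*} (G : SimpleGraph V) (d : ℕ) (f : V → Fin d) : Prop :=
  ∀ φ : G ≃g G, (∀ v, f (φ v) = f v) → ∀ v, φ v = v

/-- The distinguishing number `D(G)`. -/
noncomputable def distNum {V : Type*} (G : SimpleGraph V) : ℕ :=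
  sInf {d | ∃ f : V → Fin d, IsDistinguishing G d f}

/-- The cost `ρ_d(G)`: the minimum size of a label class in a
`d`-distinguishing labeling of `G`. -/
noncomputable def cost {V : Type*} (G : SimpleGraph V) [Fintype V] (d : ℕ) : ℕ :=
  sInf {k | ∃ (f : V → Fin d) (i : Fin d), IsDistinguishing G d f ∧
    k = (Finset.univ.filter (fun v => f v = i)).card}

/-- `S` is a determining set for `G` if automorphisms agreeing on `S` agree everywhere. -/
def IsDeterminingSet {V : Type*} (G : SimpleGraph V) (S : Set V) : Prop :=
  ∀ φ ψ : G ≃g G, (∀ v ∈ S, φ v = ψ v) → ∀ v, φ v = ψ v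

/-- The determining number `Det(G)`. -/
noncomputable def detNum {V : Type*} (G : SimpleGraph V) [Fintype V] : ℕ :=
  sInf {k | ∃ S : Finset V, IsDeterminingSet G ↑S ∧ S.card = k}

theorem stmt_4 {V : Type*} [Fintype V] (G : SimpleGraph V) (n d : ℕ)
    (hn : Fintype.card V = n) (hd : distNum G = d) :
    cost G d ≤ n - detNum G := by
  classical
  rcases Nat.eq_zero_or_pos d with hd0 | hdpos
  · subst hd0
    have hempty : {k | ∃ (f : V → Fin 0) (i : Fin 0), IsDistinguishing G 0 f ∧
        k = (Finset.univ.filter (fun v => f v = i)).card} = ∅ := by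
      ext k
      simp only [Set.mem_setOf_eq, Set.mem_empty_iff_false, iff_false]
      rintro ⟨f, i, _⟩
      exact i.elim0
    have : cost G 0 = 0 := by
      rw [cost, hempty, Nat.sInf_empty]
    rw [this]
    exact Nat.zero_le _
  · -- the set defining distNum is nonempty, so d is attained
    have hne : {d | ∃ f : V → Fin d, IsDistinguishing G d f}.Nonempty := by
      refine ⟨Fintype.card V, ⟨Fintype.equivFin V, fun φ h v => ?_⟩⟩
      exact (Fintype.equivFin V).injective (h v)
    obtain ⟨f, hf⟩ : ∃ f : V → Fin d, IsDistinguishing G d f := by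
      rw [← hd]; exact Nat.sInf_mem hne
    set i : Fin d := ⟨0, hdpos⟩ with hi
    set C : Finset V := Finset.univ.filter (fun v => f v = i) with hC
    -- the complement of a label class is a determining set
    have hdet : IsDeterminingSet G ↑(Cᶜ) := by
      intro φ ψ h v
      set χ : G ≃g G := φ.trans ψ.symm with hχ
      have hfix : ∀ w, w ∉ C → χ w = w := by
        intro w hw
        have : φ w = ψ w := h w (by simpa using hw)
        simp [hχ, this]
      have hlab : ∀ w, f (χ w) = f w := by
        intro w
        by_cases hw : w ∈ C
        · by_cases hcw : χ w ∈ C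
          · rw [Finset.mem_filter] at hw hcw
            rw [hcw.2, hw.2]
          · have := hfix (χ w) hcw
            have : χ w = w := χ.injective this
            rw [this]
        · rw [hfix w hw]
      have : χ v = v := hf χ hlab v
      have : ψ.symm (φ v) = v := this
      calc φ v = ψ (ψ.symm (φ v)) := (ψ.apply_symm_apply _).symm
        _ = ψ v := by rw [this]
    have hdetle : detNum G ≤ (Cᶜ).card := Nat.sInf_le ⟨Cᶜ, hdet, rfl⟩
    have hcompl : (Cᶜ).card = n - C.card := by
      rw [Finset.card_compl, hn]
    have hCn : C.card ≤ n := hn ▸ Finset.card_le_univ C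
    have hcost : cost G d ≤ C.card := Nat.sInf_le ⟨f, i, hf, rfl⟩
    have : n - (n - C.card) ≤ n - detNum G :=
      Nat.sub_le_sub_left (hcompl ▸ hdetle) n
    rw [Nat.sub_sub_self hCn] at this
    exact hcost.trans this
end

section
/- Let G be a graph of order n with D(G) = d. If Det(G) ≤ ρ_d(G), then Det(G) ≤ n/2. -/
open SimpleGraph

theorem stmt_6 {V : Type*} [Fintype V] (G : SimpleGraph V) (n d : ℕ)
    (hn : Fintype.card V = n) (hd : distNum G = d)
    (h : detNum G ≤ cost G d) :
    (detNum G : ℝ) ≤ (n : ℝ) / 2 := by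
  classical
  subst hn hd
  -- the set defining distNum is nonempty
  have hne : {d | ∃ f : V → Fin d, IsDistinguishing G d f}.Nonempty := by
    refine ⟨Fintype.card V, fun v => (Fintype.equivFin V) v, fun φ hφ v => ?_⟩
    exact (Fintype.equivFin V).injective (hφ v)
  obtain ⟨f, hf⟩ : ∃ f : V → Fin (distNum G), IsDistinguishing G (distNum G) f :=
    Nat.sInf_mem hne
  rcases isEmpty_or_nonempty V with hV | hV
  · have h0 : detNum G = 0 := by
      have : (0 : ℕ) ∈ {k | ∃ S : Finset V, IsDeterminingSet G ↑S ∧ S.card = k} :=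
        ⟨∅, fun φ ψ _ v => (IsEmpty.false v).elim, rfl⟩
      exact Nat.le_zero.mp (Nat.sInf_le this)
    rw [h0]
    norm_num
  · obtain ⟨v₀⟩ := hV
    set i : Fin (distNum G) := f v₀ with hi
    set C : Finset V := Finset.univ.filter (fun v => f v = i) with hC
    -- the complement of C is a determining set
    have hdet : IsDeterminingSet G ↑(Finset.univ \ C) := by
      intro φ ψ hagree v
      set σ : G ≃g G := φ.trans ψ.symm with hσ
      have hfix : ∀ w, w ∉ C → σ w = w := by
        intro w hw
        have : w ∈ Finset.univ \ C := Finset.mem_sdiff.mpr ⟨Finset.mem_univ w, hw⟩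
        have := hagree w (by simpa using this)
        simp [hσ, this]
      have hpres : ∀ w, f (σ w) = f w := by
        intro w
        by_cases hw : w ∈ C
        · by_cases hw2 : σ w ∈ C
          · have h1 : f (σ w) = i := (Finset.mem_filter.mp hw2).2
            have h2 : f w = i := (Finset.mem_filter.mp hw).2
            rw [h1, h2]
          · have : σ (σ w) = σ w := hfix _ hw2
            have : σ w = w := σ.injective this
            rw [this]
        · rw [hfix w hw]
      have := hf σ hpres v
      have : ψ.symm (φ v) = v := this
      calc φ v = ψ (ψ.symm (φ v)) := (ψ.apply_symm_apply _).symm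
        _ = ψ v := by rw [this]
    have h1 : detNum G ≤ Fintype.card V - C.card := by
      apply Nat.sInf_le
      exact ⟨Finset.univ \ C, hdet, by
        rw [Finset.card_sdiff_of_subset (Finset.subset_univ C), Finset.card_univ]⟩
    have h2 : cost G (distNum G) ≤ C.card :=
      Nat.sInf_le ⟨f, i, hf, rfl⟩
    have hCle : C.card ≤ Fintype.card V := by
      simpa using Finset.card_le_card (Finset.subset_univ C)
    have key : 2 * detNum G ≤ Fintype.card V := by omega
    have := (Nat.cast_le (α := ℝ)).mpr key
    push_cast at this
    linarith
end

section
/- If G is a graph of order n with distinguishing number D(G) = 2, then Det(G) ≤ n/2. -/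
open SimpleGraph

theorem stmt_7 {V : Type*} [Fintype V] (G : SimpleGraph V) (n : ℕ)
    (hn : Fintype.card V = n) (hd : distNum G = 2) :
    (detNum G : ℝ) ≤ (n : ℝ) / 2 := by
  classical
  -- extract a 2-distinguishing labeling
  have hmem : 2 ∈ {d | ∃ f : V → Fin d, IsDistinguishing G d f} := by
    rw [← hd]
    apply Nat.sInf_mem
    by_contra h
    rw [Set.not_nonempty_iff_eq_empty] at h
    rw [distNum, h, Nat.sInf_empty] at hd
    omega
  obtain ⟨f, hf⟩ := hmem
  -- each color class is a determining set
  have hdet : ∀ i : Fin 2, IsDeterminingSet G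
      ↑(Finset.univ.filter (fun v => f v = i)) := by
    intro i φ ψ hagree
    have hS : ∀ v, f v = i → φ v = ψ v := by
      intro v hv
      exact hagree v (by simp [hv])
    set σ : G ≃g G := φ.trans ψ.symm with hσ
    have hfix : ∀ v, f v = i → σ v = v := by
      intro v hv
      have := hS v hv
      simp [hσ, RelIso.trans_apply, this]
    have hpres : ∀ v, f (σ v) = f v := by
      intro v
      by_cases hv : f v = i
      · rw [hfix v hv, hv]
      · by_cases hσv : f (σ v) = i
        · have h1 := hfix (σ v) hσv
          have h2 : σ v = v := σ.toEquiv.injective h1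
          rw [h2]
        · have h2 : ∀ x y z : Fin 2, x ≠ z → y ≠ z → x = y := by decide
          exact h2 _ _ _ hσv hv
    have hid := hf σ hpres
    intro v
    have := hid v
    simp only [hσ, RelIso.trans_apply] at this
    calc φ v = ψ (ψ.symm (φ v)) := (ψ.apply_symm_apply _).symm
    _ = ψ v := by rw [this]
  -- cardinalities
  set a := (Finset.univ.filter (fun v => f v = (0 : Fin 2))).card with ha
  set b := (Finset.univ.filter (fun v => f v = (1 : Fin 2))).card with hb
  have hsum : a + b = n := by
    rw [ha, hb, ← hn]
    rw [← Finset.card_union_of_disjoint]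
    · congr 1
      apply Finset.eq_univ_iff_forall.mpr
      intro v
      have : f v = 0 ∨ f v = 1 := by omega
      simp [Finset.mem_union, this]
    · rw [Finset.disjoint_filter]
      intro x _ h0
      simp [h0]
  have hle0 : (detNum G : ℝ) ≤ a := Nat.cast_le.mpr (Nat.sInf_le ⟨_, hdet 0, rfl⟩)
  have hle1 : (detNum G : ℝ) ≤ b := Nat.cast_le.mpr (Nat.sInf_le ⟨_, hdet 1, rfl⟩)
  have hsum' : (a : ℝ) + b = n := by exact_mod_cast hsum
  rcases le_total a b with h | h
  · have h' : (a : ℝ) ≤ b := Nat.cast_le.mpr h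
    linarith
  · have h' : (b : ℝ) ≤ a := Nat.cast_le.mpr h
    linarith
end

section
/- The distinguishing number of the friendship graph F_n (n ≥ 2) is D(F_n) = ⌈(1 + √(8n+1))/2⌉. -/
open SimpleGraph

/-- The friendship graph `F n`: `n` triangles sharing the common central vertex `none`. -/
def friendshipGraph (n : ℕ) : SimpleGraph (Option (Fin n × Fin 2)) :=
  SimpleGraph.fromRel (fun u v =>
    u = none ∨ ∃ (i : Fin n) (a b : Fin 2), u = some (i, a) ∧ v = some (i, b))

/- ### Auxiliary lemmas -/

lemma fg_adj_none_some {n : ℕ} (p : Fin n × Fin 2) : (friendshipGraph n).Adj none (some p) := by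
  simp [friendshipGraph, SimpleGraph.fromRel_adj]

lemma fg_adj_some_some {n : ℕ} (i j : Fin n) (a b : Fin 2) :
    (friendshipGraph n).Adj (some (i,a)) (some (j,b)) ↔ i = j ∧ a ≠ b := by
  simp only [friendshipGraph, SimpleGraph.fromRel_adj, Option.some.injEq, Prod.mk.injEq,
    ne_eq, reduceCtorEq, false_or, false_and, exists_and_left]
  aesop

lemma fg_adj_some' {n : ℕ} {i : Fin n} {a : Fin 2} {v} (h : (friendshipGraph n).Adj v (some (i,a))) :
    v = none ∨ ∃ b, b ≠ a ∧ v = some (i, b) := by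
  match v with
  | none => exact Or.inl rfl
  | some (j, b) =>
    rw [fg_adj_some_some] at h
    exact Or.inr ⟨b, h.2, by rw [h.1]⟩

/-- General automorphism from a permutation of triangles and flips. -/
def autF {n : ℕ} (g : Equiv.Perm (Fin n)) (h : Fin n → Equiv.Perm (Fin 2)) :
    friendshipGraph n ≃g friendshipGraph n where
  toEquiv := Equiv.optionCongr (Equiv.prodShear g h)
  map_rel_iff' := by
    rintro (_ | ⟨i, a⟩) (_ | ⟨j, b⟩)
    · simp [Equiv.optionCongr]
    · exact ⟨fun _ => fg_adj_none_some _, fun _ => fg_adj_none_some _⟩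
    · constructor
      · intro _; exact (fg_adj_none_some (i, a)).symm
      · intro _; exact (fg_adj_none_some _).symm
    · simp only [Equiv.optionCongr_apply, Option.map_some, Equiv.prodShear_apply]
      rw [fg_adj_some_some, fg_adj_some_some]
      constructor
      · rintro ⟨h1, h2⟩
        have hij : i = j := g.injective h1
        subst hij
        exact ⟨rfl, fun hab => h2 (by rw [hab])⟩
      · rintro ⟨rfl, hab⟩
        exact ⟨rfl, fun he => hab ((h i).injective he)⟩

@[simp] lemma autF_none {n : ℕ} (g : Equiv.Perm (Fin n)) (h : Fin n → Equiv.Perm (Fin 2)) :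
    autF g h none = none := rfl

@[simp] lemma autF_some {n : ℕ} (g : Equiv.Perm (Fin n)) (h : Fin n → Equiv.Perm (Fin 2))
    (i : Fin n) (a : Fin 2) : autF g h (some (i, a)) = some (g i, h i a) := rfl

lemma phi_none {n : ℕ} (hn : 2 ≤ n) (φ : friendshipGraph n ≃g friendshipGraph n) :
    φ none = none := by
  by_contra hne
  obtain ⟨⟨i, a⟩, hia⟩ := Option.ne_none_iff_exists'.mp hne
  have h0 : (0 : ℕ) < n := by omega
  have h1 : (1 : ℕ) < n := by omega
  set x1 : Option (Fin n × Fin 2) := some (⟨0, h0⟩, 0)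
  set x2 : Option (Fin n × Fin 2) := some (⟨0, h0⟩, 1)
  set x3 : Option (Fin n × Fin 2) := some (⟨1, h1⟩, 0)
  have key : ∀ p : Fin n × Fin 2, φ (some p) = none ∨ φ (some p) = some (i, 1 - a) := by
    intro p
    have hadj : (friendshipGraph n).Adj (φ (some p)) (some (i, a)) := by
      rw [← hia]; exact φ.map_adj_iff.mpr ((friendshipGraph n).adj_symm (fg_adj_none_some p))
    rcases fg_adj_some' hadj with h | ⟨b, hb, h⟩
    · exact Or.inl h
    · right; rw [h]
      congr 1
      ext
      · rfl
      · simp only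
        have := a.isLt; have := b.isLt
        have hv : b.val ≠ a.val := fun hh => hb (Fin.ext hh)
        omega
  have inj := φ.injective.comp (Option.some_injective (Fin n × Fin 2))
  have d12 : φ x1 ≠ φ x2 := fun h => by
    have := φ.injective h; simp [x1, x2] at this
  have d13 : φ x1 ≠ φ x3 := fun h => by
    have := φ.injective h; simp [x1, x3, Fin.ext_iff] at this
  have d23 : φ x2 ≠ φ x3 := fun h => by
    have := φ.injective h; simp [x2, x3, Fin.ext_iff] at this
  rcases key (⟨0, h0⟩, 0) with h1' | h1' <;> rcases key (⟨0, h0⟩, 1) with h2' | h2' <;>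
    rcases key (⟨1, h1⟩, 0) with h3' | h3' <;>
    simp only [x1, x2, x3] at d12 d13 d23 <;>
    first
    | exact d12 (h1'.trans h2'.symm)
    | exact d13 (h1'.trans h3'.symm)
    | exact d23 (h2'.trans h3'.symm)

lemma phi_some {n : ℕ} (hn : 2 ≤ n) (φ : friendshipGraph n ≃g friendshipGraph n)
    (i : Fin n) (a : Fin 2) : ∃ j b, φ (some (i, a)) = some (j, b) := by
  match hp : φ (some (i, a)) with
  | none =>
    exact absurd (φ.injective (hp.trans (phi_none hn φ).symm)) (by simp)
  | some (j, b) => exact ⟨j, b, rfl⟩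

lemma phi_triangle {n : ℕ} (hn : 2 ≤ n) (φ : friendshipGraph n ≃g friendshipGraph n)
    (i : Fin n) : ∃ j b0 b1, b0 ≠ b1 ∧ φ (some (i, 0)) = some (j, b0) ∧
      φ (some (i, 1)) = some (j, b1) := by
  obtain ⟨j0, b0, h0⟩ := phi_some hn φ i 0
  obtain ⟨j1, b1, h1⟩ := phi_some hn φ i 1
  have hadj : (friendshipGraph n).Adj (some (j0, b0)) (some (j1, b1)) := by
    rw [← h0, ← h1]
    exact φ.map_adj_iff.mpr ((fg_adj_some_some i i 0 1).mpr ⟨rfl, by decide⟩)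
  rw [fg_adj_some_some] at hadj
  exact ⟨j0, b0, b1, hadj.2, h0, by rw [h1, hadj.1]⟩

lemma two_mul_card_lt (d : ℕ) :
    2 * (Finset.univ.filter (fun p : Fin d × Fin d => p.1 < p.2)).card = d * d - d := by
  classical
  set A := Finset.univ.filter (fun p : Fin d × Fin d => p.1 < p.2) with hA
  set B := Finset.univ.filter (fun p : Fin d × Fin d => p.2 < p.1) with hB
  have hcardAB : A.card = B.card := by
    apply Finset.card_bij (fun p _ => p.swap)
    · intro p hp; simp only [hA, hB, Finset.mem_filter, Finset.mem_univ, true_and] at *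
      exact hp
    · intro p _ q _ h; exact Prod.swap_injective h
    · intro p hp
      refine ⟨p.swap, ?_, by simp⟩
      simp only [hA, hB, Finset.mem_filter, Finset.mem_univ, true_and] at *
      exact hp
  have hdisj : Disjoint A B := by
    rw [Finset.disjoint_left]
    intro p hp hq
    simp only [hA, hB, Finset.mem_filter] at hp hq
    exact absurd hq.2 (not_lt.mpr hp.2.le)
  have hunion : A ∪ B = (Finset.univ : Finset (Fin d)).offDiag := by
    ext p
    simp only [hA, hB, Finset.mem_union, Finset.mem_filter, Finset.mem_univ, true_and,
      Finset.mem_offDiag]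
    constructor
    · rintro (h | h)
      · exact h.ne
      · exact h.ne'
    · intro h
      exact (Ne.lt_or_gt h)
  have := Finset.card_union_of_disjoint hdisj
  rw [hunion, Finset.offDiag_card, Finset.card_univ, Fintype.card_fin, ← hcardAB] at this
  omega

lemma ceil_le_iff' (n d : ℕ) (hn : 2 ≤ n) (hd : 1 ≤ d) :
    ⌈(1 + Real.sqrt (8 * n + 1)) / 2⌉₊ ≤ d ↔ 2 * n ≤ d * (d - 1) := by
  rw [Nat.ceil_le, div_le_iff₀ (by norm_num : (0:ℝ) < 2)]
  have h1 : (0:ℝ) ≤ 8 * n + 1 := by positivity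
  constructor
  · intro h
    have hs : Real.sqrt (8 * n + 1) ≤ 2 * d - 1 := by linarith
    have h2 : (8 * n + 1 : ℝ) ≤ (2 * d - 1)^2 := by
      have := Real.sq_sqrt h1
      nlinarith [Real.sqrt_nonneg (8 * (n:ℝ) + 1)]
    have h3 : (2 * n : ℝ) ≤ d * (d - 1) := by nlinarith
    have h4 : (2 * n : ℝ) ≤ (d * (d - 1) : ℕ) := by
      rwa [Nat.cast_mul, Nat.cast_sub hd, Nat.cast_one]
    exact_mod_cast h4
  · intro h
    have h3 : (2 * n : ℝ) ≤ d * (d - 1) := by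
      have : ((2 * n : ℕ) : ℝ) ≤ ((d * (d - 1) : ℕ) : ℝ) := Nat.cast_le.mpr h
      rwa [Nat.cast_mul, Nat.cast_mul, Nat.cast_sub hd, Nat.cast_one, Nat.cast_ofNat] at this
    have h2 : (8 * n + 1 : ℝ) ≤ (2 * d - 1)^2 := by nlinarith
    have hd1 : (1:ℝ) ≤ d := by exact_mod_cast hd
    have hs : Real.sqrt (8 * n + 1) ≤ 2 * d - 1 :=
      (Real.sqrt_le_sqrt h2).trans_eq (Real.sqrt_sq (by linarith))
    linarith

lemma sq_sub_self (d : ℕ) : d * d - d = d * (d - 1) := by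
  cases d with
  | zero => rfl
  | succ k => simp [Nat.succ_sub_one, Nat.mul_succ, Nat.succ_mul]

lemma fin2cases (a : Fin 2) : a = 0 ∨ a = 1 := by revert a; decide

/-- A "swap with flip" automorphism shows `f` is not distinguishing. -/
lemma not_dist_swap {n : ℕ} {d : ℕ} (f : Option (Fin n × Fin 2) → Fin d)
    (hf : IsDistinguishing (friendshipGraph n) d f) {i j : Fin n} (hij : j ≠ i)
    (π : Equiv.Perm (Fin 2)) (hπ : ∀ a, π (π a) = a)
    (hmatch : ∀ a, f (some (j, π a)) = f (some (i, a))) : False := by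
  classical
  have labels : ∀ v, f (autF (Equiv.swap i j)
      (fun k => if k = i ∨ k = j then π else 1) v) = f v := by
    rintro (_ | ⟨k, a⟩)
    · rfl
    · show f (some (Equiv.swap i j k, (if k = i ∨ k = j then π else 1) a)) = f (some (k, a))
      by_cases hki : k = i
      · subst hki
        rw [Equiv.swap_apply_left, if_pos (Or.inl rfl)]
        exact hmatch a
      · by_cases hkj : k = j
        · subst hkj
          rw [Equiv.swap_apply_right, if_pos (Or.inr rfl)]
          have := hmatch (π a)
          rw [hπ] at this
          exact this.symm
        · rw [Equiv.swap_apply_of_ne_of_ne hki hkj, if_neg (by tauto)]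
          rfl
  have key := hf (autF (Equiv.swap i j) (fun k => if k = i ∨ k = j then π else 1))
    labels (some (i, 0))
  rw [show (autF (Equiv.swap i j) (fun k => if k = i ∨ k = j then π else 1)) (some (i, 0)) =
    some (Equiv.swap i j i, (if i = i ∨ i = j then π else 1) 0) from rfl,
    Equiv.swap_apply_left] at key
  injection key with key'
  exact hij congr(($key').1)

/-- A within-triangle flip shows `f` is not distinguishing. -/
lemma not_dist_flip {n : ℕ} {d : ℕ} (f : Option (Fin n × Fin 2) → Fin d)
    (hf : IsDistinguishing (friendshipGraph n) d f) (i : Fin n)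
    (heq : f (some (i, 0)) = f (some (i, 1))) : False := by
  classical
  have labels : ∀ v, f (autF 1 (fun k => if k = i then Equiv.swap 0 1 else 1) v) = f v := by
    rintro (_ | ⟨k, a⟩)
    · rfl
    · show f (some (k, (if k = i then Equiv.swap 0 1 else 1) a)) = f (some (k, a))
      by_cases hki : k = i
      · subst hki
        rw [if_pos rfl]
        rcases fin2cases a with rfl | rfl
        · rw [Equiv.swap_apply_left]; exact heq.symm
        · rw [Equiv.swap_apply_right]; exact heq
      · rw [if_neg hki]
        rfl
  have key := hf (autF 1 (fun k => if k = i then Equiv.swap 0 1 else 1)) labels (some (i, 0))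
  rw [show (autF 1 (fun k => if k = i then Equiv.swap 0 1 else 1)) (some (i, 0)) =
      some (i, (if i = i then Equiv.swap 0 1 else 1) 0) from rfl,
    if_pos rfl, Equiv.swap_apply_left] at key
  injection key with key'
  have : (1 : Fin 2) = 0 := congr(($key').2)
  exact absurd this (by decide)

theorem stmt_8 (n : ℕ) (hn : 2 ≤ n) :
    distNum (friendshipGraph n) = ⌈(1 + Real.sqrt (8 * n + 1)) / 2⌉₊ := by
  classical
  have hD1 : 1 ≤ ⌈(1 + Real.sqrt (8 * n + 1)) / 2⌉₊ := by
    have : (0:ℝ) < (1 + Real.sqrt (8 * n + 1)) / 2 := by positivity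
    exact Nat.ceil_pos.mpr this
  set D := ⌈(1 + Real.sqrt (8 * n + 1)) / 2⌉₊ with hD
  have hD2n : 2 * n ≤ D * (D - 1) := (ceil_le_iff' n D hn hD1).mp le_rfl
  have cardS : ∀ d : ℕ, 2 * Fintype.card {p : Fin d × Fin d // p.1 < p.2} = d * (d - 1) := by
    intro d
    rw [Fintype.card_subtype, two_mul_card_lt, sq_sub_self]
  -- Upper bound: D is achievable
  have hmem : D ∈ {d | ∃ f : Option (Fin n × Fin 2) → Fin d,
      IsDistinguishing (friendshipGraph n) d f} := by
    have hcard : Fintype.card (Fin n) ≤ Fintype.card {p : Fin D × Fin D // p.1 < p.2} := by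
      have := cardS D
      rw [Fintype.card_fin]
      omega
    obtain ⟨e⟩ := Function.Embedding.nonempty_of_card_le hcard
    refine ⟨fun v => match v with
      | none => (e ⟨0, by omega⟩).1.1
      | some (i, a) => if a = 0 then (e i).1.1 else (e i).1.2, ?_⟩
    set f : Option (Fin n × Fin 2) → Fin D := fun v => match v with
      | none => (e ⟨0, by omega⟩).1.1
      | some (i, a) => if a = 0 then (e i).1.1 else (e i).1.2 with hfdef
    have hf0 : ∀ i : Fin n, f (some (i, 0)) = (e i).1.1 := fun i => if_pos rfl
    have hf1 : ∀ i : Fin n, f (some (i, 1)) = (e i).1.2 := fun i => if_neg (by decide)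
    intro φ hlab
    have key : ∀ i : Fin n, φ (some (i, 0)) = some (i, 0) ∧ φ (some (i, 1)) = some (i, 1) := by
      intro i
      obtain ⟨j, b0, b1, hb, h0, h1⟩ := phi_triangle hn φ i
      have l0 := hlab (some (i, 0))
      have l1 := hlab (some (i, 1))
      rw [h0] at l0
      rw [h1] at l1
      have hcase := (by decide :
        ∀ b0 b1 : Fin 2, b0 ≠ b1 → (b0 = 0 ∧ b1 = 1) ∨ (b0 = 1 ∧ b1 = 0)) b0 b1 hb
      rcases hcase with ⟨rfl, rfl⟩ | ⟨rfl, rfl⟩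
      · -- identity on pair
        rw [hf0, hf0] at l0
        rw [hf1, hf1] at l1
        have hji : j = i := e.injective (Subtype.ext (Prod.ext l0 l1))
        subst hji
        exact ⟨h0, h1⟩
      · -- crossed, contradicts order
        exfalso
        rw [hf1, hf0] at l0
        rw [hf0, hf1] at l1
        have hi := (e i).2
        have hj := (e j).2
        rw [l1, l0] at hj
        exact absurd (hi.trans hj) (lt_irrefl _)
    rintro (_ | ⟨i, a⟩)
    · exact phi_none hn φ
    · rcases key i with ⟨k0, k1⟩
      rcases fin2cases a with rfl | rfl
      · exact k0
      · exact k1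
  -- Lower bound
  refine le_antisymm (Nat.sInf_le hmem) (le_csInf ⟨D, hmem⟩ ?_)
  rintro d ⟨f, hf⟩
  have hd1 : 1 ≤ d := by
    rcases Nat.eq_zero_or_pos d with rfl | h
    · exact (f none).elim0
    · exact h
  rw [hD, ceil_le_iff' n d hn hd1]
  have hdist : ∀ i : Fin n, f (some (i, 0)) ≠ f (some (i, 1)) :=
    fun i heq => (not_dist_flip f hf i heq).elim
  have hFinj : Function.Injective (fun i : Fin n =>
      (if h : f (some (i, 0)) < f (some (i, 1)) then
        (⟨(f (some (i, 0)), f (some (i, 1))), h⟩ : {p : Fin d × Fin d // p.1 < p.2})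
      else ⟨(f (some (i, 1)), f (some (i, 0))),
        lt_of_le_of_ne (not_lt.mp h) (Ne.symm (hdist i))⟩)) := by
    intro i j hFij
    by_contra hij
    simp only at hFij
    have hji : j ≠ i := fun h => hij h.symm
    by_cases hi : f (some (i, 0)) < f (some (i, 1)) <;>
      by_cases hj : f (some (j, 0)) < f (some (j, 1))
    · rw [dif_pos hi, dif_pos hj] at hFij
      obtain ⟨e0, e1⟩ := Prod.mk.injEq .. ▸ Subtype.ext_iff.mp hFij
      refine not_dist_swap f hf hji 1 (fun a => rfl) ?_
      intro a
      rcases fin2cases a with rfl | rfl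
      · exact e0.symm
      · exact e1.symm
    · rw [dif_pos hi, dif_neg hj] at hFij
      obtain ⟨e0, e1⟩ := Prod.mk.injEq .. ▸ Subtype.ext_iff.mp hFij
      refine not_dist_swap f hf hji (Equiv.swap 0 1) (by decide) ?_
      intro a
      rcases fin2cases a with rfl | rfl
      · rw [Equiv.swap_apply_left]; exact e0.symm
      · rw [Equiv.swap_apply_right]; exact e1.symm
    · rw [dif_neg hi, dif_pos hj] at hFij
      obtain ⟨e0, e1⟩ := Prod.mk.injEq .. ▸ Subtype.ext_iff.mp hFij
      refine not_dist_swap f hf hji (Equiv.swap 0 1) (by decide) ?_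
      intro a
      rcases fin2cases a with rfl | rfl
      · rw [Equiv.swap_apply_left]; exact e1.symm
      · rw [Equiv.swap_apply_right]; exact e0.symm
    · rw [dif_neg hi, dif_neg hj] at hFij
      obtain ⟨e0, e1⟩ := Prod.mk.injEq .. ▸ Subtype.ext_iff.mp hFij
      refine not_dist_swap f hf hji 1 (fun a => rfl) ?_
      intro a
      rcases fin2cases a with rfl | rfl
      · exact e1.symm
      · exact e0.symm
  have hle := Fintype.card_le_of_injective _ hFinj
  rw [Fintype.card_fin] at hle
  have hc := cardS d
  omega
end

section
/- For any n ≥ 2, the determining number of the friendship graph F_n equals n. -/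
open SimpleGraph

namespace FriendshipAux

variable {n : ℕ}

lemma adj_iff (u v : Option (Fin n × Fin 2)) :
    (friendshipGraph n).Adj u v ↔ u ≠ v ∧
      (u = none ∨ v = none ∨ ∃ i a b, u = some (i, a) ∧ v = some (i, b)) := by
  simp only [friendshipGraph, fromRel_adj]
  constructor
  · rintro ⟨h, (h1 | ⟨i, a, b, rfl, rfl⟩) | (h1 | ⟨i, a, b, rfl, rfl⟩)⟩
    · exact ⟨h, Or.inl h1⟩
    · exact ⟨h, Or.inr (Or.inr ⟨i, a, b, rfl, rfl⟩)⟩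
    · exact ⟨h, Or.inr (Or.inl h1)⟩
    · exact ⟨h, Or.inr (Or.inr ⟨i, b, a, rfl, rfl⟩)⟩
  · rintro ⟨h, h1 | h1 | ⟨i, a, b, rfl, rfl⟩⟩
    · exact ⟨h, Or.inl (Or.inl h1)⟩
    · exact ⟨h, Or.inr (Or.inl h1)⟩
    · exact ⟨h, Or.inl (Or.inr ⟨i, a, b, rfl, rfl⟩)⟩

lemma adj_none (v : Option (Fin n × Fin 2)) :
    (friendshipGraph n).Adj none v ↔ v ≠ none := by
  rw [adj_iff]
  constructor
  · rintro ⟨h, -⟩; exact fun hv => h hv.symm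
  · intro h; exact ⟨fun hv => h hv.symm, Or.inl rfl⟩

lemma adj_some (i j : Fin n) (a b : Fin 2) :
    (friendshipGraph n).Adj (some (i, a)) (some (j, b)) ↔ i = j ∧ a ≠ b := by
  rw [adj_iff]
  constructor
  · rintro ⟨h, h1 | h1 | ⟨k, c, d, hc, hd⟩⟩
    · simp at h1
    · simp at h1
    · simp only [Option.some.injEq, Prod.mk.injEq] at hc hd
      obtain ⟨rfl, rfl⟩ := hc; obtain ⟨rfl, rfl⟩ := hd
      exact ⟨rfl, fun hab => h (by rw [hab])⟩
  · rintro ⟨rfl, hab⟩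
    exact ⟨by simp [hab], Or.inr (Or.inr ⟨i, a, b, rfl, rfl⟩)⟩

/-- The swap of the two outer vertices of triangle `i`. -/
def swapFun (i : Fin n) : Option (Fin n × Fin 2) → Option (Fin n × Fin 2)
  | none => none
  | some (j, a) => if j = i then some (j, a + 1) else some (j, a)

lemma swapFun_invol (i : Fin n) : Function.Involutive (swapFun i) := by
  rintro (_ | ⟨j, a⟩)
  · rfl
  · by_cases h : j = i
    · simp [swapFun, h]
      have : a + 1 + 1 = a := by revert a; decide
      simp [this]
    · simp [swapFun, h]

lemma adj_none' (v : Option (Fin n × Fin 2)) :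
    (friendshipGraph n).Adj v none ↔ v ≠ none := by
  rw [(friendshipGraph n).adj_comm, adj_none]

lemma swapFun_adj (i : Fin n) (u v : Option (Fin n × Fin 2)) :
    (friendshipGraph n).Adj (swapFun i u) (swapFun i v) ↔ (friendshipGraph n).Adj u v := by
  rcases u with _ | ⟨j, a⟩ <;> rcases v with _ | ⟨k, b⟩
  · simp [swapFun]
  · simp only [swapFun]; split_ifs <;> simp [adj_none]
  · simp only [swapFun]; split_ifs <;> simp [adj_none']
  · simp only [swapFun]
    split_ifs with h1 h2 h2 <;> simp only [adj_some]
    · constructor <;> rintro ⟨rfl, hab⟩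
      · exact ⟨rfl, fun h => hab (by rw [h])⟩
      · exact ⟨rfl, fun h => hab (add_right_cancel h)⟩
    · constructor <;> rintro ⟨rfl, hab⟩ <;> exact absurd h1 h2
    · constructor <;> rintro ⟨rfl, hab⟩ <;> exact absurd h2 h1

def swapIso (i : Fin n) : friendshipGraph n ≃g friendshipGraph n :=
  ⟨(swapFun_invol i).toPerm, swapFun_adj i _ _⟩

lemma swapIso_apply (i : Fin n) (v : Option (Fin n × Fin 2)) :
    swapIso i v = swapFun i v := rfl

lemma map_none (hn : 2 ≤ n) (φ : friendshipGraph n ≃g friendshipGraph n) :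
    φ none = none := by
  by_contra h
  obtain ⟨⟨i, a⟩, hia⟩ := Option.ne_none_iff_exists'.mp h
  obtain ⟨j, hj⟩ : ∃ j : Fin n, j ≠ i := by
    have : 1 < Fintype.card (Fin n) := by rw [Fintype.card_fin]; omega
    exact Fintype.exists_ne_of_one_lt_card this i
  set w := φ.symm (some (j, a)) with hw
  have hwn : w ≠ none := by
    intro h0
    have : some (j, a) = φ none := by rw [← h0, hw, RelIso.apply_symm_apply]
    rw [hia] at this
    simp at this
    exact hj this
  have hadj : (friendshipGraph n).Adj none w := (adj_none w).mpr hwn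
  have := φ.map_adj_iff.mpr hadj
  rw [hia, hw, RelIso.apply_symm_apply] at this
  rw [adj_some] at this
  exact hj this.1.symm

lemma fix_all (hn : 2 ≤ n) (σ : friendshipGraph n ≃g friendshipGraph n)
    (h : ∀ i : Fin n, σ (some (i, 0)) = some (i, 0)) : ∀ v, σ v = v := by
  have h0 : σ none = none := map_none hn σ
  have h1 : ∀ i : Fin n, σ (some (i, 1)) = some (i, 1) := by
    intro i
    have hadj : (friendshipGraph n).Adj (some (i, 0)) (some (i, 1)) := by
      rw [adj_some]; exact ⟨rfl, by decide⟩
    have := σ.map_adj_iff.mpr hadj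
    rw [h i] at this
    rcases hσ : σ (some (i, 1)) with _ | ⟨j, b⟩
    · exact absurd (σ.injective (hσ.trans h0.symm)) (by simp)
    · rw [hσ, adj_some] at this
      obtain ⟨hij, hb⟩ := this
      subst hij
      have hb1 : b = 1 := by omega
      rw [hb1]
  rintro (_ | ⟨i, a⟩)
  · exact h0
  · fin_cases a
    · exact h i
    · exact h1 i

/-- The canonical determining set: one outer vertex per triangle. -/
def S0 (n : ℕ) : Finset (Option (Fin n × Fin 2)) :=
  Finset.univ.image (fun i : Fin n => some (i, 0))

lemma S0_card : (S0 n).card = n := by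
  rw [S0, Finset.card_image_of_injective _ (fun i j h => by simpa using h)]
  simp

lemma S0_det (hn : 2 ≤ n) : IsDeterminingSet (friendshipGraph n) ↑(S0 n) := by
  intro φ ψ hagree v
  set σ : friendshipGraph n ≃g friendshipGraph n := φ.trans ψ.symm with hσ
  have hfix : ∀ i : Fin n, σ (some (i, 0)) = some (i, 0) := by
    intro i
    have hmem : (some (i, 0) : Option (Fin n × Fin 2)) ∈ (↑(S0 n) : Set _) := by
      simp [S0]
    have := hagree _ hmem
    simp [hσ, RelIso.trans_apply, this]
  have := fix_all hn σ hfix v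
  simp only [hσ, RelIso.trans_apply] at this
  calc φ v = ψ (ψ.symm (φ v)) := (ψ.apply_symm_apply _).symm
    _ = ψ v := by rw [this]

lemma lower (hn : 2 ≤ n) (S : Finset (Option (Fin n × Fin 2)))
    (hS : IsDeterminingSet (friendshipGraph n) ↑S) : n ≤ S.card := by
  by_contra h
  push_neg at h
  have hmiss : ∃ i : Fin n, ∀ a : Fin 2, some (i, a) ∉ S := by
    by_contra hc
    push_neg at hc
    choose a ha using hc
    have inj : Function.Injective (fun i : Fin n => (⟨some (i, a i), ha i⟩ : S)) := by
      intro i j hij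
      simp only [Subtype.mk.injEq, Option.some.injEq, Prod.mk.injEq] at hij
      exact hij.1
    have := Fintype.card_le_of_injective _ inj
    rw [Fintype.card_coe, Fintype.card_fin] at this
    omega
  obtain ⟨i, hi⟩ := hmiss
  have hagree : ∀ v ∈ (↑S : Set _), (swapIso i) v = (RelIso.refl _ : friendshipGraph n ≃g friendshipGraph n) v := by
    rintro (_ | ⟨j, b⟩) hv
    · rfl
    · have hji : j ≠ i := fun hji => hi b (by rwa [hji] at hv)
      rw [swapIso_apply]
      simp [swapFun, hji]
  have := hS (swapIso i) (RelIso.refl _) hagree (some (i, 0))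
  have h2 : (swapIso i) (some (i, 0)) = some (i, 1) := by
    rw [swapIso_apply]
    simp [swapFun]
  rw [h2] at this
  simp at this

end FriendshipAux

theorem stmt_12 (n : ℕ) (hn : 2 ≤ n) :
    detNum (friendshipGraph n) = n := by
  have hmem : n ∈ {k | ∃ S : Finset (Option (Fin n × Fin 2)),
      IsDeterminingSet (friendshipGraph n) ↑S ∧ S.card = k} :=
    ⟨FriendshipAux.S0 n, FriendshipAux.S0_det hn, FriendshipAux.S0_card⟩
  refine le_antisymm (Nat.sInf_le hmem) (le_csInf ⟨n, hmem⟩ ?_)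
  rintro k ⟨S, hdet, rfl⟩
  exact FriendshipAux.lower hn S hdet
end

section
/- For every positive integer m there exists a graph G with distinguishing number D(G) = d such that |Det(G) − ρ_d(G)| = m. -/
open SimpleGraph

/-- Every permutation is an automorphism of the complete graph. -/
def topAut {n : ℕ} (e : Fin n ≃ Fin n) :
    (⊤ : SimpleGraph (Fin n)) ≃g (⊤ : SimpleGraph (Fin n)) :=
  ⟨e, by simp⟩

@[simp] lemma topAut_apply {n : ℕ} (e : Fin n ≃ Fin n) (v : Fin n) :
    topAut e v = e v := rfl

lemma dist_iff_inj {n d : ℕ} (f : Fin n → Fin d) :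
    IsDistinguishing (⊤ : SimpleGraph (Fin n)) d f ↔ Function.Injective f := by
  constructor
  · intro h a b hab
    by_contra hne
    have key := h (topAut (Equiv.swap a b)) ?_ a
    · simp [Equiv.swap_apply_left] at key
      exact hne key.symm
    · intro v
      rcases eq_or_ne v a with rfl | hva
      · simp [Equiv.swap_apply_left, hab]
      rcases eq_or_ne v b with rfl | hvb
      · simp [Equiv.swap_apply_right, hab]
      · simp [Equiv.swap_apply_of_ne_of_ne hva hvb]
  · intro hf φ hφ v
    exact hf (hφ v)

lemma distNum_top {n : ℕ} (hn : 1 ≤ n) : distNum (⊤ : SimpleGraph (Fin n)) = n := by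
  have hmem : ∀ d, (∃ f : Fin n → Fin d, IsDistinguishing (⊤ : SimpleGraph (Fin n)) d f) ↔ n ≤ d := by
    intro d
    constructor
    · rintro ⟨f, hf⟩
      have hi : Function.Injective f := (dist_iff_inj f).1 hf
      simpa using Fintype.card_le_of_injective f hi
    · intro h
      exact ⟨Fin.castLE h, (dist_iff_inj _).2 (Fin.castLE_injective h)⟩
  unfold distNum
  refine le_antisymm (Nat.sInf_le ((hmem n).2 le_rfl)) ?_
  have hne : {d | ∃ f : Fin n → Fin d, IsDistinguishing (⊤ : SimpleGraph (Fin n)) d f}.Nonempty :=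
    ⟨n, (hmem n).2 le_rfl⟩
  exact (hmem _).1 (Nat.sInf_mem hne)

lemma cost_top {n : ℕ} (hn : 1 ≤ n) : cost (⊤ : SimpleGraph (Fin n)) n = 1 := by
  have i0 : Fin n := ⟨0, hn⟩
  have h1 : 1 ∈ {k | ∃ (f : Fin n → Fin n) (i : Fin n),
      IsDistinguishing (⊤ : SimpleGraph (Fin n)) n f ∧
      k = (Finset.univ.filter (fun v => f v = i)).card} := by
    refine ⟨id, i0, (dist_iff_inj _).2 (fun a b h => h), ?_⟩
    simp [Finset.filter_eq']
  have h0 : 0 ∉ {k | ∃ (f : Fin n → Fin n) (i : Fin n),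
      IsDistinguishing (⊤ : SimpleGraph (Fin n)) n f ∧
      k = (Finset.univ.filter (fun v => f v = i)).card} := by
    rintro ⟨f, i, hf, hcard⟩
    have hi : Function.Injective f := (dist_iff_inj f).1 hf
    have hs : Function.Surjective f := Finite.surjective_of_injective hi
    obtain ⟨v, hv⟩ := hs i
    have : v ∈ Finset.univ.filter (fun v => f v = i) := by simp [hv]
    have := Finset.card_pos.2 ⟨v, this⟩
    omega
  unfold cost
  refine le_antisymm (Nat.sInf_le h1) ?_
  rcases Nat.eq_zero_or_pos (sInf _) with h | h
  · rcases Nat.sInf_eq_zero.1 h with hc | hc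
    · exact absurd hc h0
    · rw [hc] at h1; exact absurd h1 (Set.notMem_empty _)
  · exact h

lemma detNum_top {n : ℕ} (hn : 1 ≤ n) : detNum (⊤ : SimpleGraph (Fin n)) = n - 1 := by
  have hmem : n - 1 ∈ {k | ∃ S : Finset (Fin n),
      IsDeterminingSet (⊤ : SimpleGraph (Fin n)) ↑S ∧ S.card = k} := by
    refine ⟨({(⟨0, hn⟩ : Fin n)} : Finset (Fin n))ᶜ, ?_, by rw [Finset.card_compl]; simp⟩
    intro φ ψ hagree v
    rcases eq_or_ne v (⟨0, hn⟩ : Fin n) with hvz | hv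
    · set w : Fin n := ψ.symm (φ v) with hwdef
      have hw : ψ w = φ v := ψ.apply_symm_apply (φ v)
      rcases eq_or_ne w v with hwv | hwv
      · rw [← hwv, hw, hwv]
      · exfalso
        have hwz : w ≠ (⟨0, hn⟩ : Fin n) := hvz ▸ hwv
        have h1 : φ w = ψ w := hagree w (by simp [hwz])
        have h2 : φ v = φ w := by rw [h1, hw]
        exact hwv (φ.injective h2.symm)
    · exact hagree v (by simp [hv])
  unfold detNum
  refine le_antisymm (Nat.sInf_le hmem) (le_csInf ⟨_, hmem⟩ ?_)
  rintro k ⟨S, hS, rfl⟩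
  by_contra hlt
  push_neg at hlt
  have hcompl : 1 < Sᶜ.card := by
    have := Finset.card_compl S
    simp at this
    omega
  obtain ⟨a, ha, b, hb, hab⟩ := Finset.one_lt_card.1 hcompl
  have hag : ∀ v ∈ (↑S : Set (Fin n)), (topAut (Equiv.swap a b)) v = (topAut (Equiv.refl (Fin n))) v := by
    intro v hv
    have hva : v ≠ a := fun h => (Finset.mem_compl.1 ha) (h ▸ hv)
    have hvb : v ≠ b := fun h => (Finset.mem_compl.1 hb) (h ▸ hv)
    simp [Equiv.swap_apply_of_ne_of_ne hva hvb]
  have key := hS (topAut (Equiv.swap a b)) (topAut (Equiv.refl _)) hag a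
  simp [Equiv.swap_apply_left] at key
  exact hab key.symm

theorem stmt_13 (m : ℕ) (hm : 0 < m) :
    ∃ (V : Type) (_ : Fintype V) (G : SimpleGraph V) (d : ℕ),
      distNum G = d ∧ |(detNum G : ℤ) - (cost G d : ℤ)| = m := by
  refine ⟨Fin (m + 2), inferInstance, ⊤, m + 2, distNum_top (by omega), ?_⟩
  rw [detNum_top (by omega), cost_top (by omega)]
  have : ((m + 2 - 1 : ℕ) : ℤ) - (1 : ℕ) = m := by push_cast; omega
  rw [this]
  simp
end

section
/- Let G and H be connected graphs of orders n, m ≥ 2 with D(G) = k and D(H) = k'. If k'' = max{k, k'} and D(G ∘ H) = k'', then ρ_{k''}(G ∘ H) ≤ ρ_k(G) + n·ρ_{k'}(H). -/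
open SimpleGraph

/-- The corona product `G ∘ H`: one copy of `G` and, for each vertex `v` of `G`,
a copy of `H` all of whose vertices are joined to `v`. -/
def corona {V W : Type*} (G : SimpleGraph V) (H : SimpleGraph W) :
    SimpleGraph (V ⊕ V × W) :=
  SimpleGraph.fromRel (fun a b =>
    match a, b with
    | .inl u, .inl v => G.Adj u v
    | .inl u, .inr (v, _) => u = v
    | .inr (u, w), .inr (v, w') => u = v ∧ H.Adj w w'
    | _, _ => False)

section CoronaAux
variable {V W : Type*} {G : SimpleGraph V} {H : SimpleGraph W}

lemma corona_adj_inl_inl {u v : V} :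
    (corona G H).Adj (.inl u) (.inl v) ↔ G.Adj u v := by
  simp only [corona, fromRel_adj]
  constructor
  · rintro ⟨_, h | h⟩
    · exact h
    · exact h.symm
  · intro h; exact ⟨by simp [h.ne], Or.inl h⟩

lemma corona_adj_inl_inr {u v : V} {w : W} :
    (corona G H).Adj (.inl u) (.inr (v, w)) ↔ u = v := by
  simp [corona, fromRel_adj]

lemma corona_adj_inr_inr {u v : V} {w w' : W} :
    (corona G H).Adj (.inr (u, w)) (.inr (v, w')) ↔ u = v ∧ H.Adj w w' := by
  simp only [corona, fromRel_adj]
  constructor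
  · rintro ⟨_, ⟨rfl, h⟩ | ⟨rfl, h⟩⟩
    · exact ⟨rfl, h⟩
    · exact ⟨rfl, h.symm⟩
  · rintro ⟨rfl, h⟩
    exact ⟨by simp [h.ne], Or.inl ⟨rfl, h⟩⟩

section Main
variable [Fintype V] [Fintype W]

lemma corona_card_inl (hG : G.Connected) (hn2 : 2 ≤ Fintype.card V) (v : V) :
    Fintype.card W + 1 ≤ Nat.card ((corona G H).neighborSet (Sum.inl v)) := by
  obtain ⟨v', hv'⟩ := Fintype.exists_ne_of_one_lt_card (by omega) v
  obtain ⟨u, hu⟩ : ∃ u, G.Adj v u := by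
    obtain ⟨p⟩ := (hG v v')
    cases p with
    | nil => exact absurd rfl hv'.symm
    | cons h _ => exact ⟨_, h⟩
  classical
  have hinj : Function.Injective (fun o : Option W =>
      (Option.elim o ⟨Sum.inl u, (corona_adj_inl_inl (G := G) (H := H)).2 hu⟩
        (fun w => ⟨Sum.inr (v, w), (corona_adj_inl_inr (G := G) (H := H)).2 rfl⟩) :
        (corona G H).neighborSet (Sum.inl v))) := by
    intro a b hab
    cases a <;> cases b <;> simp_all [Subtype.ext_iff]
  simpa using Nat.card_le_card_of_injective _ hinj

lemma corona_card_inr (v : V) (w : W) :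
    Nat.card ((corona G H).neighborSet (Sum.inr (v, w))) ≤ Fintype.card W := by
  classical
  have hinj : Function.Injective (fun x : (corona G H).neighborSet (Sum.inr (v, w)) =>
      (Sum.elim (fun _ => w) (fun p => p.2) x.1)) := by
    rintro ⟨a | ⟨ua, wa⟩, ha⟩ ⟨b | ⟨ub, wb⟩, hb⟩ hab <;>
      simp only [Sum.elim_inl, Sum.elim_inr, Subtype.mk.injEq] at hab ⊢
    · have ha' := (corona_adj_inl_inr (G := G) (H := H)).1 (((corona G H).mem_neighborSet _ _).1 ha).symm
      have hb' := (corona_adj_inl_inr (G := G) (H := H)).1 (((corona G H).mem_neighborSet _ _).1 hb).symm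
      exact congrArg Sum.inl (ha'.trans hb'.symm)
    · have hb' := (corona_adj_inr_inr (G := G) (H := H)).1 (((corona G H).mem_neighborSet _ _).1 hb)
      exact absurd hab.symm hb'.2.ne'
    · have ha' := (corona_adj_inr_inr (G := G) (H := H)).1 (((corona G H).mem_neighborSet _ _).1 ha)
      exact absurd hab ha'.2.ne'
    · have ha' := (corona_adj_inr_inr (G := G) (H := H)).1 (((corona G H).mem_neighborSet _ _).1 ha)
      have hb' := (corona_adj_inr_inr (G := G) (H := H)).1 (((corona G H).mem_neighborSet _ _).1 hb)
      obtain ⟨rfl, _⟩ := ha'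
      obtain ⟨rfl, _⟩ := hb'
      simp [hab]
  simpa using Nat.card_le_card_of_injective _ hinj

end Main

section Dist
variable [Fintype V] [Fintype W]

lemma corona_distinguishing {d : ℕ} (hG : G.Connected) (hn2 : 2 ≤ Fintype.card V)
    (fG : V → Fin d) (fH : W → Fin d)
    (hfG : IsDistinguishing G d fG) (hfH : IsDistinguishing H d fH) :
    IsDistinguishing (corona G H) d (Sum.elim fG (fun p => fH p.2)) := by
  intro φ hφ
  -- Step 1: φ maps inl vertices to inl vertices
  have hinl : ∀ v : V, ∃ u, φ (Sum.inl v) = Sum.inl u := by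
    intro v
    rcases h : φ (Sum.inl v) with u | ⟨pv, pw⟩
    · exact ⟨u, rfl⟩
    · exfalso
      have hcard : Nat.card ((corona G H).neighborSet (Sum.inl v)) =
          Nat.card ((corona G H).neighborSet (φ (Sum.inl v))) :=
        Nat.card_congr (φ.mapNeighborSet _)
      rw [h] at hcard
      have h1 := corona_card_inl (H := H) hG hn2 v
      have h2 := corona_card_inr (G := G) (H := H) pv pw
      omega
  choose σ hσ using hinl
  have hσinj : Function.Injective σ := by
    intro a b hab
    have : φ (Sum.inl a) = φ (Sum.inl b) := by rw [hσ, hσ, hab]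
    exact Sum.inl_injective (φ.injective this)
  have hσbij : Function.Bijective σ := Finite.injective_iff_bijective.1 hσinj
  have hmap : ∀ a b : V, G.Adj (σ a) (σ b) ↔ G.Adj a b := by
    intro a b
    rw [← corona_adj_inl_inl (G := G) (H := H), ← hσ a, ← hσ b, φ.map_adj_iff,
      corona_adj_inl_inl]
  let ψ : G ≃g G := { toEquiv := Equiv.ofBijective σ hσbij, map_rel_iff' := hmap _ _ }
  have hψlab : ∀ v, fG (ψ v) = fG v := by
    intro v
    have := hφ (Sum.inl v)
    rw [hσ v] at this
    exact this
  have hfixl : ∀ v, φ (Sum.inl v) = Sum.inl v := by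
    intro v
    rw [hσ v]
    exact congrArg Sum.inl (hfG ψ hψlab v)
  -- Step 2: φ maps each H-copy to itself
  have hinr : ∀ (v : V) (w : W), ∃ w', φ (Sum.inr (v, w)) = Sum.inr (v, w') := by
    intro v w
    rcases h : φ (Sum.inr (v, w)) with u | ⟨v', w'⟩
    · exfalso
      have : φ (Sum.inl u) = φ (Sum.inr (v, w)) := by rw [hfixl u, h]
      exact absurd (φ.injective this) (by simp)
    · have hadj : (corona G H).Adj (Sum.inl v) (Sum.inr (v, w)) :=
        (corona_adj_inl_inr (G := G) (H := H)).2 rfl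
      have h2 : (corona G H).Adj (φ (Sum.inl v)) (φ (Sum.inr (v, w))) := φ.map_adj_iff.2 hadj
      rw [hfixl v, h] at h2
      have := (corona_adj_inl_inr (G := G) (H := H)).1 h2
      exact ⟨w', by rw [this]⟩
  intro x
  rcases x with v | ⟨v, w⟩
  · exact hfixl v
  · choose τ hτ using hinr v
    have hτinj : Function.Injective τ := by
      intro a b hab
      have : φ (Sum.inr (v, a)) = φ (Sum.inr (v, b)) := by rw [hτ, hτ, hab]
      have := φ.injective this
      simpa using this
    have hτbij : Function.Bijective τ := Finite.injective_iff_bijective.1 hτinj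
    have hmapH : ∀ a b : W, H.Adj (τ a) (τ b) ↔ H.Adj a b := by
      intro a b
      constructor
      · intro h
        have : (corona G H).Adj (φ (Sum.inr (v, a))) (φ (Sum.inr (v, b))) := by
          rw [hτ a, hτ b]
          exact (corona_adj_inr_inr (G := G) (H := H)).2 ⟨rfl, h⟩
        exact ((corona_adj_inr_inr (G := G) (H := H)).1 (φ.map_adj_iff.1 this)).2
      · intro h
        have : (corona G H).Adj (φ (Sum.inr (v, a))) (φ (Sum.inr (v, b))) :=
          φ.map_adj_iff.2 ((corona_adj_inr_inr (G := G) (H := H)).2 ⟨rfl, h⟩)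
        rw [hτ a, hτ b] at this
        exact ((corona_adj_inr_inr (G := G) (H := H)).1 this).2
    let χ : H ≃g H := { toEquiv := Equiv.ofBijective τ hτbij, map_rel_iff' := hmapH _ _ }
    have hχlab : ∀ w, fH (χ w) = fH w := by
      intro w
      have := hφ (Sum.inr (v, w))
      rw [hτ w] at this
      exact this
    rw [hτ w]
    exact congrArg Sum.inr (congrArg _ (hfH χ hχlab w))

end Dist

end CoronaAux

theorem stmt_16 {V W : Type*} [Fintype V] [Fintype W]
    (G : SimpleGraph V) (H : SimpleGraph W) (n m k k' : ℕ)
    (hn : Fintype.card V = n) (hm : Fintype.card W = m)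
    (hn2 : 2 ≤ n) (hm2 : 2 ≤ m) (hG : G.Connected) (hH : H.Connected)
    (hk : distNum G = k) (hk' : distNum H = k')
    (hcor : distNum (corona G H) = max k k') :
    cost (corona G H) (max k k') ≤ cost G k + n * cost H k' := by
  classical
  subst hn hm
  have hGne : Nonempty V := Fintype.card_pos_iff.1 (by omega)
  have hWne : Nonempty W := Fintype.card_pos_iff.1 (by omega)
  -- distinguishing labelings with exactly k (resp. k') labels exist
  have hkmem : ∃ f : V → Fin k, IsDistinguishing G k f := by
    rw [← hk]
    have hne : {d | ∃ f : V → Fin d, IsDistinguishing G d f}.Nonempty :=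
      ⟨Fintype.card V, fun v => Fintype.equivFin V v,
        fun φ hφ v => (Fintype.equivFin V).injective (hφ v)⟩
    exact Nat.sInf_mem hne
  have hk'mem : ∃ f : W → Fin k', IsDistinguishing H k' f := by
    rw [← hk']
    have hne : {d | ∃ f : W → Fin d, IsDistinguishing H d f}.Nonempty :=
      ⟨Fintype.card W, fun w => Fintype.equivFin W w,
        fun φ hφ w => (Fintype.equivFin W).injective (hφ w)⟩
    exact Nat.sInf_mem hne
  have hk1 : 1 ≤ k := hkmem.choose hGne.some |>.pos
  have hk'1 : 1 ≤ k' := hk'mem.choose hWne.some |>.pos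
  -- labelings achieving the costs
  obtain ⟨fG, iG, hfG, hcG⟩ :
      ∃ (f : V → Fin k) (i : Fin k), IsDistinguishing G k f ∧
        cost G k = (Finset.univ.filter (fun v => f v = i)).card := by
    obtain ⟨f, hf⟩ := hkmem
    have hne : {c | ∃ (f : V → Fin k) (i : Fin k), IsDistinguishing G k f ∧
        c = (Finset.univ.filter (fun v => f v = i)).card}.Nonempty :=
      ⟨_, f, ⟨0, hk1⟩, hf, rfl⟩
    exact Nat.sInf_mem hne
  obtain ⟨fH, iH, hfH, hcH⟩ :
      ∃ (f : W → Fin k') (i : Fin k'), IsDistinguishing H k' f ∧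
        cost H k' = (Finset.univ.filter (fun w => f w = i)).card := by
    obtain ⟨f, hf⟩ := hk'mem
    have hne : {c | ∃ (f : W → Fin k') (i : Fin k'), IsDistinguishing H k' f ∧
        c = (Finset.univ.filter (fun w => f w = i)).card}.Nonempty :=
      ⟨_, f, ⟨0, hk'1⟩, hf, rfl⟩
    exact Nat.sInf_mem hne
  -- move the minimal class to label 0
  set zk : Fin k := ⟨0, hk1⟩ with hzk
  set zk' : Fin k' := ⟨0, hk'1⟩ with hzk'
  set fG' : V → Fin k := fun v => Equiv.swap iG zk (fG v) with hfG'def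
  set fH' : W → Fin k' := fun w => Equiv.swap iH zk' (fH w) with hfH'def
  have hfG' : IsDistinguishing G k fG' :=
    fun φ hφ v => hfG φ (fun u => (Equiv.swap iG zk).injective (hφ u)) v
  have hfH' : IsDistinguishing H k' fH' :=
    fun φ hφ w => hfH φ (fun u => (Equiv.swap iH zk').injective (hφ u)) w
  have hcG' : (Finset.univ.filter (fun v => fG' v = zk)).card = cost G k := by
    rw [hcG]
    apply congrArg Finset.card
    apply Finset.filter_congr
    intro v _
    simp only [hfG'def, eq_iff_iff]
    constructor
    · intro h
      exact (Equiv.swap iG zk).injective (h.trans (Equiv.swap_apply_left iG zk).symm)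
    · intro h
      rw [h]; exact Equiv.swap_apply_left iG zk
  have hcH' : (Finset.univ.filter (fun w => fH' w = zk')).card = cost H k' := by
    rw [hcH]
    apply congrArg Finset.card
    apply Finset.filter_congr
    intro w _
    simp only [hfH'def, eq_iff_iff]
    constructor
    · intro h
      exact (Equiv.swap iH zk').injective (h.trans (Equiv.swap_apply_left iH zk').symm)
    · intro h
      rw [h]; exact Equiv.swap_apply_left iH zk'
  -- the combined labeling
  set d := max k k' with hd
  have h1 : k ≤ d := le_max_left _ _
  have h2 : k' ≤ d := le_max_right _ _
  have hd1 : 1 ≤ d := le_trans hk1 h1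
  set z0 : Fin d := ⟨0, hd1⟩ with hz0
  set F : V ⊕ V × W → Fin d :=
    Sum.elim (fun v => Fin.castLE h1 (fG' v)) (fun p => Fin.castLE h2 (fH' p.2)) with hFdef
  have hF : IsDistinguishing (corona G H) d F :=
    corona_distinguishing hG (by omega)
      (fun v => Fin.castLE h1 (fG' v)) (fun w => Fin.castLE h2 (fH' w))
      (fun φ hφ v => hfG' φ (fun u => Fin.castLE_injective h1 (hφ u)) v)
      (fun φ hφ w => hfH' φ (fun u => Fin.castLE_injective h2 (hφ u)) w)
  have hle : cost (corona G H) d ≤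
      (Finset.univ.filter (fun x => F x = z0)).card :=
    Nat.sInf_le ⟨F, z0, hF, rfl⟩
  -- count the class of label 0
  have hGpart : ∀ v : V, (F (Sum.inl v) = z0) ↔ fG' v = zk := by
    intro v
    simp only [hFdef, Sum.elim_inl]
    constructor
    · intro h
      exact Fin.castLE_injective h1 (h.trans (by ext; simp [hz0, hzk]))
    · intro h
      rw [h]; ext; simp [hz0, hzk]
  have hHpart : ∀ p : V × W, (F (Sum.inr p) = z0) ↔ fH' p.2 = zk' := by
    intro p
    simp only [hFdef, Sum.elim_inr]
    constructor
    · intro h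
      exact Fin.castLE_injective h2 (h.trans (by ext; simp [hz0, hzk']))
    · intro h
      rw [h]; ext; simp [hz0, hzk']
  have hcount : (Finset.univ.filter (fun x => F x = z0)).card
      = cost G k + Fintype.card V * cost H k' := by
    have eprod : {p : V × W // fH' p.2 = zk'} ≃ V × {w : W // fH' w = zk'} :=
      { toFun := fun x => (x.1.1, ⟨x.1.2, x.2⟩)
        invFun := fun y => ⟨(y.1, y.2.1), y.2.2⟩
        left_inv := fun x => rfl
        right_inv := fun y => rfl }
    calc (Finset.univ.filter (fun x => F x = z0)).card
        = Fintype.card {x : V ⊕ V × W // F x = z0} := (Fintype.card_subtype _).symm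
      _ = Fintype.card ({v : V // F (Sum.inl v) = z0} ⊕ {p : V × W // F (Sum.inr p) = z0}) :=
          Fintype.card_congr Equiv.subtypeSum
      _ = Fintype.card {v : V // F (Sum.inl v) = z0}
            + Fintype.card {p : V × W // F (Sum.inr p) = z0} := Fintype.card_sum
      _ = Fintype.card {v : V // fG' v = zk}
            + Fintype.card {p : V × W // fH' p.2 = zk'} := by
          rw [Fintype.card_congr (Equiv.subtypeEquivRight hGpart),
            Fintype.card_congr (Equiv.subtypeEquivRight hHpart)]
      _ = cost G k + Fintype.card V * cost H k' := by
          rw [Fintype.card_congr eprod, Fintype.card_prod, Fintype.card_subtype,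
            Fintype.card_subtype, hcG', hcH']
  rw [hcount] at hle
  exact hle
end
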